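/- Let n be a nonempty finite type with decidable equality, let ρ : Matrix n n ℂ be positive semidefinite with positive semidefinite square root ρ^{1/2}, and let P : Matrix n n ℂ be a Hermitian idempotent (Pᴴ = P and P * P = P) whose column space equals that of ρ (LinearMap.range of the linear map induced by P equals LinearMap.range of the linear map induced by ρ). Then the set { m : Matrix n n ℂ | ∃ a, m = a * ρ^{1/2} } equals the set { m : Matrix n n ℂ | m * P = m }. (This identifies the image of the GNS isometry V : a|ω⟩ ↦ a√ρ inside ℋ ⊗ ℋ* with ℋ ⊗ Pℋ*, where P is the projection onto the support of ρ.) -/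

import Mathlib

open Matrix ComplexOrder

/-- The square root of a positive semidefinite matrix (the definition removed from Mathlib,
restated verbatim). -/
noncomputable def Matrix.PosSemidef.sqrt {n : Type*} [Fintype n] [DecidableEq n]
    {A : Matrix n n ℂ} (hA : A.PosSemidef) : Matrix n n ℂ :=
  hA.1.eigenvectorUnitary.1 * diagonal ((↑) ∘ (√·) ∘ hA.1.eigenvalues) *
    (star hA.1.eigenvectorUnitary : Matrix n n ℂ)

lemma Matrix.PosSemidef.posSemidef_sqrt {n : Type*} [Fintype n] [DecidableEq n]
    {A : Matrix n n ℂ} (hA : A.PosSemidef) : hA.sqrt.PosSemidef := by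
  unfold Matrix.PosSemidef.sqrt
  rw [star_eq_conjTranspose]
  refine (posSemidef_diagonal_iff.mpr ?_).mul_mul_conjTranspose_same _
  intro i
  simp only [Function.comp_apply]
  exact_mod_cast Real.sqrt_nonneg _

lemma Matrix.PosSemidef.sqrt_mul_self {n : Type*} [Fintype n] [DecidableEq n]
    {A : Matrix n n ℂ} (hA : A.PosSemidef) : hA.sqrt * hA.sqrt = A := by
  unfold Matrix.PosSemidef.sqrt
  conv_rhs => rw [hA.1.spectral_theorem, Unitary.conjStarAlgAut_apply]
  have hU : (star hA.1.eigenvectorUnitary : Matrix n n ℂ) * hA.1.eigenvectorUnitary.1 = 1 :=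
    Unitary.star_mul_self_of_mem hA.1.eigenvectorUnitary.2
  have hD : diagonal ((↑) ∘ (√·) ∘ hA.1.eigenvalues) * diagonal ((↑) ∘ (√·) ∘ hA.1.eigenvalues)
      = diagonal (RCLike.ofReal ∘ hA.1.eigenvalues : n → ℂ) := by
    rw [diagonal_mul_diagonal]
    congr 1
    funext i
    simp only [Function.comp_apply]
    rw [← Complex.ofReal_mul, Real.mul_self_sqrt (hA.eigenvalues_nonneg i)]
    rfl
  calc _ = hA.1.eigenvectorUnitary.1 * diagonal ((↑) ∘ (√·) ∘ hA.1.eigenvalues) *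
        ((star hA.1.eigenvectorUnitary : Matrix n n ℂ) * hA.1.eigenvectorUnitary.1) *
        diagonal ((↑) ∘ (√·) ∘ hA.1.eigenvalues) *
        (star hA.1.eigenvectorUnitary : Matrix n n ℂ) := by simp only [mul_assoc]
    _ = _ := by rw [hU, mul_one, mul_assoc _ (diagonal _) (diagonal _), hD]

lemma sqrt_range_eq
    {n : Type*} [Fintype n] [DecidableEq n]
    (ρ : Matrix n n ℂ) (hρ : ρ.PosSemidef) :
    LinearMap.range hρ.sqrt.mulVecLin = LinearMap.range ρ.mulVecLin := by
  have hρeq : ρ = hρ.sqrtᴴ * hρ.sqrt := by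
    rw [hρ.posSemidef_sqrt.isHermitian, hρ.sqrt_mul_self]
  have hker : LinearMap.ker hρ.sqrt.mulVecLin = LinearMap.ker ρ.mulVecLin := by
    ext v
    simp only [LinearMap.mem_ker, mulVecLin_apply, hρeq]
    exact (conjTranspose_mul_self_mulVec_eq_zero hρ.sqrt v).symm
  have hle : LinearMap.range ρ.mulVecLin ≤ LinearMap.range hρ.sqrt.mulVecLin := by
    rintro x ⟨v, rfl⟩
    refine ⟨hρ.sqrt *ᵥ v, ?_⟩
    simp only [mulVecLin_apply, mulVec_mulVec, hρ.sqrt_mul_self]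
  refine (Submodule.eq_of_le_of_finrank_eq hle ?_).symm
  have h1 := LinearMap.finrank_range_add_finrank_ker hρ.sqrt.mulVecLin
  have h2 := LinearMap.finrank_range_add_finrank_ker ρ.mulVecLin
  rw [hker] at h1
  omega

/-- The image of the GNS isometry `V : a|ω⟩ ↦ a√ρ` inside `ℋ ⊗ ℋ*` is
`ℋ ⊗ Pℋ*`: if `P` is the Hermitian idempotent whose column space equals the
column space of `ρ`, then `{ a√ρ | a } = { m | m * P = m }`. -/
theorem gns_image_eq_support
    (n : Type*) [Fintype n] [DecidableEq n] [Nonempty n]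
    (ρ : Matrix n n ℂ) (hρ : ρ.PosSemidef)
    (P : Matrix n n ℂ) (hP1 : Pᴴ = P) (hP2 : P * P = P)
    (hPrange : LinearMap.range P.mulVecLin = LinearMap.range ρ.mulVecLin) :
    { m : Matrix n n ℂ | ∃ a, m = a * hρ.sqrt } =
      { m : Matrix n n ℂ | m * P = m } := by
  have hrange : LinearMap.range hρ.sqrt.mulVecLin = LinearMap.range P.mulVecLin := by
    rw [sqrt_range_eq ρ hρ, hPrange]
  -- P acts as identity on its range
  have hPid : ∀ x ∈ LinearMap.range P.mulVecLin, P *ᵥ x = x := by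
    rintro x ⟨v, rfl⟩
    simp only [mulVecLin_apply, mulVec_mulVec, hP2]
  -- P * √ρ = √ρ
  have hPsqrt : P * hρ.sqrt = hρ.sqrt := by
    ext i j
    have hcolmem : (fun i => hρ.sqrt i j) ∈ LinearMap.range P.mulVecLin := by
      rw [← hrange]
      exact ⟨Pi.single j 1, by funext i; simp [mulVecLin_apply, mulVec_single]⟩
    have := congrFun (hPid _ hcolmem) i
    simpa [Matrix.mul_apply, mulVec, dotProduct] using this
  have hsqrtP : hρ.sqrt * P = hρ.sqrt := by
    calc hρ.sqrt * P = (Pᴴ * hρ.sqrtᴴ)ᴴ := by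
          rw [conjTranspose_mul, conjTranspose_conjTranspose,
            conjTranspose_conjTranspose]
      _ = hρ.sqrt := by
          rw [hP1, hρ.posSemidef_sqrt.isHermitian, hPsqrt,
            hρ.posSemidef_sqrt.isHermitian]
  ext m
  simp only [Set.mem_setOf_eq]
  constructor
  · rintro ⟨a, rfl⟩
    rw [mul_assoc, hsqrtP]
  · intro hm
    -- mᴴ = P * mᴴ, so each column of mᴴ is in range √ρ
    have hmH : P * mᴴ = mᴴ := by
      calc P * mᴴ = (m * Pᴴ)ᴴ := by rw [conjTranspose_mul, conjTranspose_conjTranspose]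
        _ = mᴴ := by rw [hP1, hm]
    have hcol : ∀ j, ∃ v, hρ.sqrt *ᵥ v = fun i => mᴴ i j := by
      intro j
      have : (fun i => mᴴ i j) ∈ LinearMap.range P.mulVecLin := by
        refine ⟨fun k => mᴴ k j, ?_⟩
        funext i
        have := congrFun (congrFun hmH i) j
        simpa [mulVecLin_apply, mulVec, dotProduct, Matrix.mul_apply] using this
      rw [← hrange] at this
      obtain ⟨v, hv⟩ := this
      exact ⟨v, hv⟩
    choose b hb using hcol
    refine ⟨(Matrix.of fun i j => b j i)ᴴ, ?_⟩
    have : hρ.sqrt * (Matrix.of fun i j => b j i) = mᴴ := by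
      ext i j
      have := congrFun (hb j) i
      simpa [Matrix.mul_apply, mulVec, dotProduct] using this
    calc m = (mᴴ)ᴴ := by rw [conjTranspose_conjTranspose]
      _ = (hρ.sqrt * (Matrix.of fun i j => b j i))ᴴ := by rw [this]
      _ = (Matrix.of fun i j => b j i)ᴴ * hρ.sqrtᴴ := by rw [conjTranspose_mul]
      _ = (Matrix.of fun i j => b j i)ᴴ * hρ.sqrt := by
          rw [hρ.posSemidef_sqrt.isHermitian]
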